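/- arXiv:2003.05187 — 2 statements merged into one kernel-verified Lean document; each statement's English description precedes it below -/
import Mathlib

section
/- The (extended-real-valued lower Lebesgue) integral of the extremal function is bounded by the dimension: ∫_X S(x) dμ(x) ≤ d. (First half of the integral inequality in Lemma 2.2 of the paper.) -/
open MeasureTheory
open scoped ENNReal ComplexConjugate

/-- First half of the integral inequality in Lemma 2.2: `∫⁻ S ≤ d`. -/
theorem bergman_extremal_integral_le_dim
    {X : Type*} [MeasurableSpace X] (μ : Measure X) (N d : ℕ) (hN : 0 < N) (hd : 0 < d)
    (α : Fin d → X → EuclideanSpace ℂ (Fin N))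
    (hmeas : ∀ j, StronglyMeasurable (α j))
    (hnorm : ∀ j, ∫ x, ‖α j x‖ ^ 2 ∂μ = 1)
    (horth : ∀ i j, i ≠ j → ∫ x, (inner ℂ (α i x) (α j x) : ℂ) ∂μ = 0)
    (S : X → ℝ)
    (hS : ∀ x, S x = sSup {t : ℝ | ∃ a ∈ Submodule.span ℂ (Set.range α),
        (∫ y, ‖a y‖ ^ 2 ∂μ) ≤ 1 ∧ t = ‖a x‖ ^ 2}) :
    ∫⁻ x, ENNReal.ofReal (S x) ∂μ ≤ (d : ℝ≥0∞) := by
  -- integrability of the squared norms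
  have hint : ∀ j, Integrable (fun x => ‖α j x‖ ^ 2) μ := by
    intro j
    by_contra h
    have := hnorm j
    rw [integral_undef h] at this
    norm_num at this
  -- integrability of pointwise inner products
  have hinner : ∀ i j, Integrable (fun x => (inner ℂ (α i x) (α j x) : ℂ)) μ := by
    intro i j
    refine Integrable.mono' ((hint i).add (hint j))
      (((hmeas i).inner (hmeas j)).aestronglyMeasurable)
      (Filter.Eventually.of_forall fun x => ?_)
    calc ‖(inner ℂ (α i x) (α j x) : ℂ)‖ ≤ ‖α i x‖ * ‖α j x‖ := norm_inner_le_norm _ _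
      _ ≤ ‖α i x‖ ^ 2 + ‖α j x‖ ^ 2 := by
          nlinarith [norm_nonneg (α i x), norm_nonneg (α j x), sq_nonneg (‖α i x‖ - ‖α j x‖)]
  -- the diagonal integrals
  have hdiag : ∀ j, ∫ x, (inner ℂ (α j x) (α j x) : ℂ) ∂μ = 1 := by
    intro j
    have h1 : ∀ x, (inner ℂ (α j x) (α j x) : ℂ) = ((‖α j x‖ ^ 2 : ℝ) : ℂ) := by
      intro x
      rw [inner_self_eq_norm_sq_to_K]
      norm_cast
    simp_rw [h1]
    rw [show (fun x => ((‖α j x‖ ^ 2 : ℝ) : ℂ)) = fun x =>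
        (RCLike.ofReal (K := ℂ) (‖α j x‖ ^ 2)) from rfl, integral_ofReal, hnorm j]
    norm_num
  -- norm of an arbitrary element of the span
  have key : ∀ c : Fin d → ℂ,
      ∫ x, ‖∑ j, c j • α j x‖ ^ 2 ∂μ = ∑ j, ‖c j‖ ^ 2 := by
    intro c
    have expand : ∀ x, ((‖∑ j, c j • α j x‖ ^ 2 : ℝ) : ℂ)
        = ∑ i, ∑ j, conj (c i) * c j * (inner ℂ (α i x) (α j x) : ℂ) := by
      intro x
      have h1 : ((‖∑ j, c j • α j x‖ ^ 2 : ℝ) : ℂ)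
          = (inner ℂ (∑ j, c j • α j x) (∑ j, c j • α j x) : ℂ) := by
        rw [inner_self_eq_norm_sq_to_K]; norm_cast
      rw [h1, sum_inner]
      refine Finset.sum_congr rfl fun i _ => ?_
      rw [inner_sum]
      refine Finset.sum_congr rfl fun j _ => ?_
      rw [inner_smul_left, inner_smul_right]
      ring
    have hC : ∫ x, ((‖∑ j, c j • α j x‖ ^ 2 : ℝ) : ℂ) ∂μ = ((∑ i, ‖c i‖ ^ 2 : ℝ) : ℂ) := by
      simp_rw [expand]
      rw [integral_finset_sum _ (fun i _ =>
        integrable_finset_sum _ (fun j _ => (hinner i j).const_mul _))]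
      have h2 : ∀ i, ∫ x, ∑ j, conj (c i) * c j * (inner ℂ (α i x) (α j x) : ℂ) ∂μ
          = ((‖c i‖ ^ 2 : ℝ) : ℂ) := by
        intro i
        rw [integral_finset_sum _ (fun j _ => (hinner i j).const_mul _)]
        have h3 : ∀ j, ∫ x, conj (c i) * c j * (inner ℂ (α i x) (α j x) : ℂ) ∂μ
            = if j = i then ((‖c i‖ ^ 2 : ℝ) : ℂ) else 0 := by
          intro j
          rw [integral_const_mul]
          by_cases h : j = i
          · subst h
            rw [hdiag, mul_one, if_pos rfl, RCLike.conj_mul]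
            norm_cast
          · rw [horth i j (fun hij => h hij.symm), mul_zero, if_neg h]
        simp_rw [h3]
        simp
      simp_rw [h2]
      push_cast
      ring
    rw [show (fun x => ((‖∑ j, c j • α j x‖ ^ 2 : ℝ) : ℂ)) = fun x =>
        (RCLike.ofReal (K := ℂ) (‖∑ j, c j • α j x‖ ^ 2)) from rfl, integral_ofReal] at hC
    have hC' : ((∫ x, ‖∑ j, c j • α j x‖ ^ 2 ∂μ : ℝ) : ℂ) = ((∑ i, ‖c i‖ ^ 2 : ℝ) : ℂ) := hC
    exact_mod_cast hC'
  -- pointwise Cauchy-Schwarz bound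
  set B : X → ℝ := fun x => ∑ j, ‖α j x‖ ^ 2 with hB
  have hBnn : ∀ x, 0 ≤ B x := fun x => Finset.sum_nonneg fun j _ => sq_nonneg _
  have hptwise : ∀ (c : Fin d → ℂ) (x : X),
      ‖∑ j, c j • α j x‖ ^ 2 ≤ (∑ j, ‖c j‖ ^ 2) * B x := by
    intro c x
    calc ‖∑ j, c j • α j x‖ ^ 2 ≤ (∑ j, ‖c j‖ * ‖α j x‖) ^ 2 := by
          refine pow_le_pow_left₀ (norm_nonneg _) ?_ 2
          refine (norm_sum_le _ _).trans_eq ?_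
          exact Finset.sum_congr rfl fun j _ => norm_smul _ _
      _ ≤ (∑ j, ‖c j‖ ^ 2) * ∑ j, ‖α j x‖ ^ 2 :=
          Finset.sum_mul_sq_le_sq_mul_sq _ _ _
  -- S ≤ B pointwise
  have hSB : ∀ x, S x ≤ B x := by
    intro x
    rw [hS x]
    refine Real.sSup_le ?_ (hBnn x)
    rintro t ⟨a, ha, haint, rfl⟩
    obtain ⟨c, hc⟩ := (Submodule.mem_span_range_iff_exists_fun ℂ).1 ha
    have hax : a x = ∑ j, c j • α j x := by
      rw [← hc]
      simp [Finset.sum_apply]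
    have hsum : (∑ j, ‖c j‖ ^ 2) ≤ 1 := by
      rw [← key c]
      refine le_trans (le_of_eq ?_) haint
      refine integral_congr_ae (Filter.Eventually.of_forall fun y => ?_)
      rw [← hc]
      simp [Finset.sum_apply]
    calc ‖a x‖ ^ 2 = ‖∑ j, c j • α j x‖ ^ 2 := by rw [hax]
      _ ≤ (∑ j, ‖c j‖ ^ 2) * B x := hptwise c x
      _ ≤ 1 * B x := mul_le_mul_of_nonneg_right hsum (hBnn x)
      _ = B x := one_mul _
  -- conclude
  have hBmeas : ∀ j : Fin d, Measurable (fun x => ENNReal.ofReal (‖α j x‖ ^ 2)) := by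
    intro j
    exact ENNReal.measurable_ofReal.comp ((hmeas j).norm.measurable.pow_const 2)
  calc ∫⁻ x, ENNReal.ofReal (S x) ∂μ ≤ ∫⁻ x, ENNReal.ofReal (B x) ∂μ :=
        lintegral_mono fun x => ENNReal.ofReal_le_ofReal (hSB x)
    _ = ∫⁻ x, ∑ j, ENNReal.ofReal (‖α j x‖ ^ 2) ∂μ := by
        refine lintegral_congr fun x => ?_
        exact ENNReal.ofReal_sum_of_nonneg (fun j _ => sq_nonneg _)
    _ = ∑ j, ∫⁻ x, ENNReal.ofReal (‖α j x‖ ^ 2) ∂μ :=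
        lintegral_finset_sum _ (fun j _ => hBmeas j)
    _ = ∑ _j : Fin d, (1 : ℝ≥0∞) := by
        refine Finset.sum_congr rfl fun j _ => ?_
        rw [← ofReal_integral_eq_lintegral_ofReal (hint j)
          (Filter.Eventually.of_forall fun x => sq_nonneg _), hnorm j]
        norm_num
    _ = (d : ℝ≥0∞) := by simp
end

section
/- The dimension is bounded by N times the (extended-real-valued lower Lebesgue) integral of the extremal function: d ≤ N · ∫_X S(x) dμ(x). (Second half of the integral inequality in Lemma 2.2 of the paper.) -/
open MeasureTheory
open scoped ENNReal

/-- Second half of the integral inequality in Lemma 2.2: `d ≤ N * ∫⁻ S`. -/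
theorem bergman_dim_le_integral
    {X : Type*} [MeasurableSpace X] (μ : Measure X) (N d : ℕ) (hN : 0 < N) (hd : 0 < d)
    (α : Fin d → X → EuclideanSpace ℂ (Fin N))
    (hmeas : ∀ j, StronglyMeasurable (α j))
    (hnorm : ∀ j, ∫ x, ‖α j x‖ ^ 2 ∂μ = 1)
    (horth : ∀ i j, i ≠ j → ∫ x, (inner ℂ (α i x) (α j x) : ℂ) ∂μ = 0)
    (S : X → ℝ)
    (hS : ∀ x, S x = sSup {t : ℝ | ∃ a ∈ Submodule.span ℂ (Set.range α),
        (∫ y, ‖a y‖ ^ 2 ∂μ) ≤ 1 ∧ t = ‖a x‖ ^ 2}) :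
    (d : ℝ≥0∞) ≤ (N : ℝ≥0∞) * ∫⁻ x, ENNReal.ofReal (S x) ∂μ := by
  -- integrability of ‖α j‖²
  have hInt : ∀ j, Integrable (fun x => ‖α j x‖ ^ 2) μ := by
    intro j
    by_contra h
    have := hnorm j
    rw [integral_undef h] at this
    norm_num at this
  -- integrability of the inner products
  have hIntInner : ∀ i j, Integrable (fun x => (inner ℂ (α i x) (α j x) : ℂ)) μ := by
    intro i j
    refine Integrable.mono' (((hInt i).add (hInt j)).div_const 2)
      (((hmeas i).inner (hmeas j)).aestronglyMeasurable)
      (Filter.Eventually.of_forall fun x => ?_)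
    calc ‖(inner ℂ (α i x) (α j x) : ℂ)‖ ≤ ‖α i x‖ * ‖α j x‖ := norm_inner_le_norm _ _
      _ ≤ (‖α i x‖ ^ 2 + ‖α j x‖ ^ 2) / 2 := by nlinarith [sq_nonneg (‖α i x‖ - ‖α j x‖)]
  -- orthonormality in integral form
  have hg : ∀ i j, (∫ x, (inner ℂ (α i x) (α j x) : ℂ) ∂μ) = if i = j then 1 else 0 := by
    intro i j
    by_cases h : i = j
    · subst h
      simp only [if_pos rfl]
      have heq : ∀ x, (inner ℂ (α i x) (α i x) : ℂ) = ((‖α i x‖ ^ 2 : ℝ) : ℂ) := by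
        intro x
        rw [inner_self_eq_norm_sq_to_K]
        norm_cast
      simp_rw [heq]
      have : ∫ x, ((‖α i x‖ ^ 2 : ℝ) : ℂ) ∂μ = ((∫ x, ‖α i x‖ ^ 2 ∂μ : ℝ) : ℂ) :=
        integral_ofReal
      rw [this, hnorm i]
      norm_num
    · rw [if_neg h]
      exact horth i j h
  -- key L² norm identity
  have key : ∀ c : Fin d → ℂ, ∫ x, ‖∑ j, c j • α j x‖ ^ 2 ∂μ = ∑ j, ‖c j‖ ^ 2 := by
    intro c
    have hexp : ∀ x, (inner ℂ (∑ i, c i • α i x) (∑ j, c j • α j x) : ℂ)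
        = ∑ i, ∑ j, (starRingEnd ℂ) (c i) * c j * inner ℂ (α i x) (α j x) := by
      intro x
      rw [sum_inner]
      refine Finset.sum_congr rfl fun i _ => ?_
      rw [inner_sum]
      refine Finset.sum_congr rfl fun j _ => ?_
      rw [inner_smul_left, inner_smul_right]
      ring
    have hIi : ∀ i : Fin d, Integrable
        (fun x => ∑ j, (starRingEnd ℂ) (c i) * c j * (inner ℂ (α i x) (α j x) : ℂ)) μ :=
      fun i => integrable_finset_sum _ fun j _ => ((hIntInner i j).const_mul _)
    have hIntSum : Integrable (fun x => (inner ℂ (∑ i, c i • α i x) (∑ j, c j • α j x) : ℂ)) μ := by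
      simp_rw [hexp]
      exact integrable_finset_sum _ fun i _ => hIi i
    have h1 : ∫ x, (inner ℂ (∑ i, c i • α i x) (∑ j, c j • α j x) : ℂ) ∂μ
        = ((∑ j, ‖c j‖ ^ 2 : ℝ) : ℂ) := by
      simp_rw [hexp]
      rw [integral_finset_sum _ fun i _ => hIi i]
      have : ∀ i : Fin d, ∫ x, ∑ j, (starRingEnd ℂ) (c i) * c j * (inner ℂ (α i x) (α j x) : ℂ) ∂μ
          = (‖c i‖ ^ 2 : ℝ) := by
        intro i
        rw [integral_finset_sum _ fun j _ => ((hIntInner i j).const_mul _)]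
        have : ∀ j : Fin d, ∫ x, (starRingEnd ℂ) (c i) * c j * (inner ℂ (α i x) (α j x) : ℂ) ∂μ
            = if i = j then ((‖c i‖ ^ 2 : ℝ) : ℂ) else 0 := by
          intro j
          rw [integral_const_mul, hg i j]
          by_cases h : i = j
          · subst h
            simp [RCLike.conj_mul, ← Complex.normSq_eq_norm_sq, Complex.normSq_eq_conj_mul_self]
          · simp [h]
        simp_rw [this]
        simp
      simp_rw [this]
      push_cast
      ring
    have h2 : ∀ x, ‖∑ j, c j • α j x‖ ^ 2
        = RCLike.re (inner ℂ (∑ i, c i • α i x) (∑ j, c j • α j x) : ℂ) := by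
      intro x
      rw [inner_self_eq_norm_sq]
    simp_rw [h2]
    rw [integral_re hIntSum, h1]
    exact RCLike.ofReal_re _
  -- every element of the sup-set is bounded by the Bergman kernel
  have hBdd : ∀ x, ∀ t ∈ {t : ℝ | ∃ a ∈ Submodule.span ℂ (Set.range α),
      (∫ y, ‖a y‖ ^ 2 ∂μ) ≤ 1 ∧ t = ‖a x‖ ^ 2}, t ≤ ∑ j, ‖α j x‖ ^ 2 := by
    rintro x t ⟨a, ha, hint, rfl⟩
    obtain ⟨c, rfl⟩ := (Submodule.mem_span_range_iff_exists_fun ℂ).mp ha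
    have hax : ∀ y, (∑ j, c j • α j) y = ∑ j, c j • α j y := by
      intro y
      simp [Finset.sum_apply]
    rw [hax] at *
    have hint' : (∑ j, ‖c j‖ ^ 2) ≤ 1 := by
      rw [← key c]
      calc (∫ x, ‖∑ j, c j • α j x‖ ^ 2 ∂μ) ≤ ∫ y, ‖(∑ j, c j • α j) y‖ ^ 2 ∂μ := by
            apply le_of_eq; congr 1; ext y; rw [hax]
        _ ≤ 1 := hint
    have h1 : ‖∑ j, c j • α j x‖ ≤ ∑ j, ‖c j‖ * ‖α j x‖ := by
      refine (norm_sum_le _ _).trans ?_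
      apply le_of_eq
      exact Finset.sum_congr rfl fun j _ => norm_smul _ _
    calc ‖∑ j, c j • α j x‖ ^ 2 ≤ (∑ j, ‖c j‖ * ‖α j x‖) ^ 2 := by
          apply pow_le_pow_left₀ (norm_nonneg _) h1
      _ ≤ (∑ j, ‖c j‖ ^ 2) * ∑ j, ‖α j x‖ ^ 2 :=
          Finset.sum_mul_sq_le_sq_mul_sq _ _ _
      _ ≤ 1 * ∑ j, ‖α j x‖ ^ 2 := by
          apply mul_le_mul_of_nonneg_right hint'
          exact Finset.sum_nonneg fun j _ => sq_nonneg _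
      _ = ∑ j, ‖α j x‖ ^ 2 := one_mul _
  -- the sup-set is nonempty (contains 0)
  have hmem0 : ∀ x, (0 : ℝ) ∈ {t : ℝ | ∃ a ∈ Submodule.span ℂ (Set.range α),
      (∫ y, ‖a y‖ ^ 2 ∂μ) ≤ 1 ∧ t = ‖a x‖ ^ 2} := by
    intro x
    refine ⟨0, Submodule.zero_mem _, ?_, by simp⟩
    simp
  -- pointwise bound : Bergman kernel ≤ N * S
  have hpoint : ∀ x, ∑ j, ‖α j x‖ ^ 2 ≤ N * S x := by
    intro x
    have hcol : ∀ k : Fin N, ∑ j, ‖α j x k‖ ^ 2 ≤ S x := by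
      intro k
      set t : ℝ := ∑ j, ‖α j x k‖ ^ 2 with ht
      have htnn : 0 ≤ t := Finset.sum_nonneg fun j _ => sq_nonneg _
      rw [hS x]
      rcases eq_or_lt_of_le htnn with h0 | h0
      · rw [← h0]
        exact le_csSup ⟨_, hBdd x⟩ (hmem0 x)
      · -- witness
        set c : Fin d → ℂ := fun j => ((Real.sqrt t : ℝ) : ℂ)⁻¹ * (starRingEnd ℂ) (α j x k) with hc
        have hsq : Real.sqrt t ≠ 0 := by positivity
        have hnormc : ∑ j, ‖c j‖ ^ 2 = 1 := by
          have : ∀ j, ‖c j‖ ^ 2 = (Real.sqrt t)⁻¹ ^ 2 * ‖α j x k‖ ^ 2 := by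
            intro j
            rw [hc]
            simp [norm_mul, mul_pow]
          simp_rw [this, ← Finset.mul_sum, ← ht]
          rw [inv_pow, Real.sq_sqrt htnn]
          field_simp
        have hmem : ‖(∑ j, c j • α j) x‖ ^ 2 ∈ {t : ℝ | ∃ a ∈ Submodule.span ℂ (Set.range α),
            (∫ y, ‖a y‖ ^ 2 ∂μ) ≤ 1 ∧ t = ‖a x‖ ^ 2} := by
          refine ⟨∑ j, c j • α j, ?_, ?_, rfl⟩
          · exact (Submodule.mem_span_range_iff_exists_fun ℂ).mpr ⟨c, rfl⟩
          · have : (∫ y, ‖(∑ j, c j • α j) y‖ ^ 2 ∂μ) = ∑ j, ‖c j‖ ^ 2 := by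
              rw [← key c]
              congr 1
              ext y
              simp [Finset.sum_apply]
            rw [this, hnormc]
        have hval : t ≤ ‖(∑ j, c j • α j) x‖ ^ 2 := by
          have hax : (∑ j, c j • α j) x = ∑ j, c j • α j x := by simp [Finset.sum_apply]
          have hcoord : ((∑ j, c j • α j x) : EuclideanSpace ℂ (Fin N)) k
              = ((Real.sqrt t : ℝ) : ℂ)⁻¹ * (t : ℂ) := by
            have : ∀ j : Fin d, ((c j • α j x : EuclideanSpace ℂ (Fin N)) k)
                = ((Real.sqrt t : ℝ) : ℂ)⁻¹ * ((‖α j x k‖ ^ 2 : ℝ) : ℂ) := by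
              intro j
              have : (starRingEnd ℂ) (α j x k) * (α j x k) = ((‖α j x k‖ ^ 2 : ℝ) : ℂ) := by
                rw [RCLike.conj_mul]
                norm_cast
              simp [hc, mul_assoc, this]
            have happ : ((∑ j, c j • α j x) : EuclideanSpace ℂ (Fin N)) k
                = ∑ j, ((c j • α j x : EuclideanSpace ℂ (Fin N)) k) := by
              simp
            rw [happ, Finset.sum_congr rfl fun j _ => this j, ← Finset.mul_sum]
            congr 1
            push_cast [ht]
            norm_num
          have hnk : ‖((∑ j, c j • α j x) : EuclideanSpace ℂ (Fin N)) k‖ ^ 2 = t := by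
            rw [hcoord]
            rw [norm_mul]
            rw [norm_inv]
            have h1 : ‖((Real.sqrt t : ℝ) : ℂ)‖ = Real.sqrt t := by
              rw [Complex.norm_real, Real.norm_eq_abs, abs_of_nonneg (Real.sqrt_nonneg _)]
            have h2 : ‖((t : ℝ) : ℂ)‖ = t := by
              rw [Complex.norm_real, Real.norm_eq_abs, abs_of_nonneg htnn]
            rw [h1, h2]
            rw [mul_pow, inv_pow, Real.sq_sqrt htnn]
            field_simp
          have hnormsq : ‖(∑ j, c j • α j x : EuclideanSpace ℂ (Fin N))‖ ^ 2
              = ∑ k', ‖((∑ j, c j • α j x) : EuclideanSpace ℂ (Fin N)) k'‖ ^ 2 := by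
            rw [EuclideanSpace.norm_eq]
            rw [Real.sq_sqrt]
            exact Finset.sum_nonneg fun _ _ => sq_nonneg _
          rw [hax, hnormsq, ← hnk]
          exact Finset.single_le_sum
            (f := fun k' => ‖((∑ j, c j • α j x) : EuclideanSpace ℂ (Fin N)) k'‖ ^ 2)
            (fun k' _ => sq_nonneg _) (Finset.mem_univ k)
        exact hval.trans (le_csSup ⟨_, hBdd x⟩ hmem)
    have hBexp : ∑ j, ‖α j x‖ ^ 2 = ∑ k : Fin N, ∑ j, ‖α j x k‖ ^ 2 := by
      rw [Finset.sum_comm]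
      refine Finset.sum_congr rfl fun j _ => ?_
      rw [EuclideanSpace.norm_eq, Real.sq_sqrt]
      exact Finset.sum_nonneg fun _ _ => sq_nonneg _
    calc ∑ j, ‖α j x‖ ^ 2 = ∑ k : Fin N, ∑ j, ‖α j x k‖ ^ 2 := hBexp
      _ ≤ ∑ _k : Fin N, S x := Finset.sum_le_sum fun k _ => hcol k
      _ = N * S x := by simp [Finset.sum_const, nsmul_eq_mul]
  -- S is nonnegative
  have hSnn : ∀ x, 0 ≤ S x := by
    intro x
    rw [hS x]
    exact le_csSup ⟨_, hBdd x⟩ (hmem0 x)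
  -- put it together via lintegral
  have hmeasB : ∀ j : Fin d, Measurable fun x => ENNReal.ofReal (‖α j x‖ ^ 2) :=
    fun j => ENNReal.measurable_ofReal.comp (((hmeas j).norm.measurable).pow_const 2)
  have hstep : (d : ℝ≥0∞) = ∫⁻ x, ∑ j, ENNReal.ofReal (‖α j x‖ ^ 2) ∂μ := by
    rw [lintegral_finset_sum _ fun j _ => hmeasB j]
    have : ∀ j : Fin d, ∫⁻ x, ENNReal.ofReal (‖α j x‖ ^ 2) ∂μ = 1 := by
      intro j
      rw [← ofReal_integral_eq_lintegral_ofReal (hInt j)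
        (Filter.Eventually.of_forall fun x => sq_nonneg _), hnorm j]
      simp
    rw [Finset.sum_congr rfl fun j _ => this j]
    simp
  rw [hstep]
  calc (∫⁻ x, ∑ j, ENNReal.ofReal (‖α j x‖ ^ 2) ∂μ)
      ≤ ∫⁻ x, (N : ℝ≥0∞) * ENNReal.ofReal (S x) ∂μ := by
        apply lintegral_mono
        intro x
        dsimp only
        rw [← ENNReal.ofReal_sum_of_nonneg fun j _ => sq_nonneg _]
        calc ENNReal.ofReal (∑ j, ‖α j x‖ ^ 2) ≤ ENNReal.ofReal ((N : ℝ) * S x) :=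
              ENNReal.ofReal_le_ofReal (hpoint x)
          _ = (N : ℝ≥0∞) * ENNReal.ofReal (S x) := by
              rw [ENNReal.ofReal_mul (by positivity)]
              simp
    _ = (N : ℝ≥0∞) * ∫⁻ x, ENNReal.ofReal (S x) ∂μ :=
        lintegral_const_mul' _ _ (by simp)
end
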